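/- arXiv:1905.09609 — 5 statements merged into one kernel-verified Lean document; each statement's English description precedes it below -/
import Mathlib

section
/- For every pair of total computable functions u₃ : ℕ → ℕ and h : ℕ → ℕ there exist total computable functions f : ℕ × ℕ → ℕ and g : ℕ → ℕ such that: (i) for all a, m: φ_{g(a)}(m) is defined and φ_{g(a)}(m) = u₃(f(a, (m)₁)); and (ii) for all a, t, s such that φ_{(a)₁}(⟨t,s⟩) is defined, writing x = φ_{(a)₁}(⟨t,s⟩): φ_{f(a,t)}(s) is defined, and φ_{f(a,t)}(s) = u₃(h((x)₁)) if (x)₀ = 0, while φ_{f(a,t)}(s) = ⟨1, g(x)⟩ if (x)₀ ≠ 0. -/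
noncomputable section

/-- The `e`-th partial recursive function `ℕ ⇀ ℕ`. -/
def phi (e : ℕ) : ℕ →. ℕ := (Denumerable.ofNat Nat.Partrec.Code e).eval

/-- The monotone operator `Ψ₀`. -/
def Psi0 : Set ℕ →o Set ℕ where
  toFun J := {a | (∃ e, a = Nat.pair 0 e) ∨
    ∃ e, a = Nat.pair 1 e ∧ ∀ k, ∃ v ∈ phi e k, v ∈ J}
  monotone' := by
    intro J J' hJ a ha
    rcases ha with ⟨e, he⟩ | ⟨e, he, hk⟩
    · exact Or.inl ⟨e, he⟩
    · refine Or.inr ⟨e, he, fun k => ?_⟩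
      obtain ⟨v, hv, hvJ⟩ := hk k
      exact ⟨v, hv, hJ hvJ⟩

/-- `I`, the least fixed point of `Ψ₀`. -/
def Iset : Set ℕ := OrderHom.lfp Psi0

/-- The transfinite stages `I_ξ`. -/
def Istage : Ordinal → Set ℕ :=
  WellFounded.fix Ordinal.lt_wf fun ξ ih =>
    if ξ = 0 then {a | ∃ e, a = Nat.pair 0 e}
    else {a | ∃ e, a = Nat.pair 1 e ∧
      ∀ k, ∃ v ∈ phi e k, ∃ η, ∃ hη : η < ξ, v ∈ ih η hη}

/-- The norm `‖a‖` of `a ∈ I`: the least ordinal `ξ` with `a ∈ I_ξ`. -/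
def Inorm (a : ℕ) : Ordinal := sInf {ξ | a ∈ Istage ξ}

/-- The monotone operator `Ψ₁`. -/
def Psi1 : Set (ℕ × ℕ) →o Set (ℕ × ℕ) where
  toFun A := {p | (∃ e, p.1 = Nat.pair 0 e ∧ p.2 = e) ∨
    ∃ e, p.1 = Nat.pair 1 e ∧ ∃ t, ∀ s, ∃ v ∈ phi e (Nat.pair t s), (v, p.2) ∈ A}
  monotone' := by
    intro A A' hA p hp
    rcases hp with ⟨e, he, hx⟩ | ⟨e, he, t, ht⟩
    · exact Or.inl ⟨e, he, hx⟩
    · refine Or.inr ⟨e, he, t, fun s => ?_⟩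
      obtain ⟨v, hv, hvA⟩ := ht s
      exact ⟨v, hv, hA hvA⟩

/-- `Hp`, the least fixed point of `Ψ₁`. -/
def Hp : Set (ℕ × ℕ) := OrderHom.lfp Psi1

/-- `H_a`, the `a`-section of `Hp`. -/
def Hset (a : ℕ) : Set ℕ := {x | (a, x) ∈ Hp}

/-- The monotone operator `Φ_ψ` associated with the positive formula `ψ`. -/
def PhiPsi : Set ℕ →o Set ℕ where
  toFun R := {y | ∃ a x e, y = Nat.pair a x ∧
    ((a = Nat.pair 0 e ∧ x = e) ∨
     (a = Nat.pair 1 e ∧ ∃ t, ∀ s, ∃ v ∈ phi e (Nat.pair t s), Nat.pair v x ∈ R))}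
  monotone' := by
    intro R R' hR y hy
    obtain ⟨a, x, e, hy, hcase⟩ := hy
    refine ⟨a, x, e, hy, ?_⟩
    rcases hcase with h | ⟨he, t, ht⟩
    · exact Or.inl h
    · refine Or.inr ⟨he, t, fun s => ?_⟩
      obtain ⟨v, hv, hvR⟩ := ht s
      exact ⟨v, hv, hR hvR⟩

open Nat.Partrec (Code)
open Nat.Partrec.Code

set_option maxHeartbeats 1000000

/-- Claim 3: for any total computable `u₃, h` there are total computable `f, g` with
`φ_{g(a)}(m) = u₃(f(a, (m)₁))` (always defined), and whenever `x = φ_{(a)₁}(⟨t,s⟩)` is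
defined, `φ_{f(a,t)}(s)` is defined and equals `u₃(h((x)₁))` if `(x)₀ = 0`, and
`⟨1, g(x)⟩` otherwise. -/
theorem exists_f_g (u₃ h : ℕ → ℕ) (hu₃ : Computable u₃) (hh : Computable h) :
    ∃ (f : ℕ × ℕ → ℕ) (g : ℕ → ℕ), Computable f ∧ Computable g ∧
      (∀ a m : ℕ, phi (g a) m = Part.some (u₃ (f (a, m.unpair.2)))) ∧
      (∀ a t s x : ℕ, x ∈ phi a.unpair.2 (Nat.pair t s) →
        (x.unpair.1 = 0 → phi (f (a, t)) s = Part.some (u₃ (h x.unpair.2))) ∧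
        (x.unpair.1 ≠ 0 → phi (f (a, t)) s = Part.some (Nat.pair 1 (g x)))) := by
  classical
  -- primrec helpers
  have pu1 : Primrec fun n : ℕ => n.unpair.1 := Primrec.fst.comp Primrec.unpair
  have pu2 : Primrec fun n : ℕ => n.unpair.2 := Primrec.snd.comp Primrec.unpair
  -- Step 1: a code `d` with eval d ⟨⟨c̃,a⟩,m⟩ = u₃ (encode (curry (ofNat c̃) ⟨a,(m)₁⟩))
  obtain ⟨d, hd⟩ : ∃ d : Code, d.eval = fun q : ℕ =>
      Part.some (u₃ (Encodable.encode (curry (Denumerable.ofNat Code q.unpair.1.unpair.1)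
        (Nat.pair q.unpair.1.unpair.2 q.unpair.2.unpair.2)))) := by
    apply exists_code.mp
    apply Partrec.nat_iff.mp
    have : Computable fun q : ℕ =>
        u₃ (Encodable.encode (curry (Denumerable.ofNat Code q.unpair.1.unpair.1)
          (Nat.pair q.unpair.1.unpair.2 q.unpair.2.unpair.2))) := by
      apply hu₃.comp
      apply Primrec.to_comp
      exact Primrec.encode.comp (primrec₂_curry.comp
        ((Primrec.ofNat Code).comp (pu1.comp pu1))
        (Primrec₂.natPair.comp (pu2.comp pu1) (pu2.comp pu2)))
    exact this.partrec
  -- Step 2: fixed point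
  have hF : Partrec₂ fun (c : Code) (n : ℕ) =>
      (eval (Denumerable.ofNat Code n.unpair.1.unpair.1.unpair.2)
        (Nat.pair n.unpair.1.unpair.2 n.unpair.2)).map fun x =>
        cond (decide (x.unpair.1 = 0)) (u₃ (h x.unpair.2))
          (Nat.pair 1 (Encodable.encode (curry d (Nat.pair (Encodable.encode c) x)))) := by
    apply Partrec.map
    · exact eval_part.comp
        ((Computable.ofNat Code).comp
          ((pu2.comp (pu1.comp (pu1.comp Primrec.snd))).to_comp))
        ((Primrec₂.natPair.comp (pu2.comp (pu1.comp Primrec.snd))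
          (pu2.comp Primrec.snd)).to_comp)
    · have hcond : Computable fun q : (Code × ℕ) × ℕ =>
          cond (decide (q.2.unpair.1 = 0)) (u₃ (h q.2.unpair.2))
            (Nat.pair 1 (Encodable.encode (curry d
              (Nat.pair (Encodable.encode q.1.1) q.2)))) := by
        apply Computable.cond
        · exact Primrec.to_comp (Primrec.eq.comp (pu1.comp Primrec.snd)
            (Primrec.const 0)).decide
        · exact (hu₃.comp (hh.comp (pu2.comp Primrec.snd).to_comp))
        · apply Primrec.to_comp
          exact Primrec₂.natPair.comp (Primrec.const 1)
            (Primrec.encode.comp (primrec₂_curry.comp (Primrec.const d)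
              (Primrec₂.natPair.comp (Primrec.encode.comp (Primrec.fst.comp Primrec.fst))
                Primrec.snd)))
      exact hcond.to₂
  obtain ⟨c, hc⟩ := fixed_point₂ hF
  refine ⟨fun p => Encodable.encode (curry c (Nat.pair p.1 p.2)),
    fun a => Encodable.encode (curry d (Nat.pair (Encodable.encode c) a)), ?_, ?_, ?_, ?_⟩
  · exact Primrec.to_comp (Primrec.encode.comp (primrec₂_curry.comp (Primrec.const c)
      (Primrec₂.natPair.comp Primrec.fst Primrec.snd)))
  · exact Primrec.to_comp (Primrec.encode.comp (primrec₂_curry.comp (Primrec.const d)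
      (Primrec₂.natPair.comp (Primrec.const (Encodable.encode c)) Primrec.id)))
  · intro a m
    show eval (Denumerable.ofNat Code (Encodable.encode _)) m = _
    rw [Denumerable.ofNat_encode, eval_curry, hd]
    simp
  · intro a t s x hx
    have key : phi (Encodable.encode (curry c (Nat.pair a t))) s =
        (phi a.unpair.2 (Nat.pair t s)).map fun x =>
          cond (decide (x.unpair.1 = 0)) (u₃ (h x.unpair.2))
            (Nat.pair 1 (Encodable.encode (curry d (Nat.pair (Encodable.encode c) x)))) := by
      show eval (Denumerable.ofNat Code (Encodable.encode _)) s = _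
      rw [Denumerable.ofNat_encode, eval_curry, hc]
      simp [phi]
    rw [Part.eq_some_iff.mpr hx] at key
    constructor
    · intro h0
      rw [key]
      simp [h0]
    · intro h0
      rw [key]
      simp [h0]
end
end

section
/- There exists a computable function u₃ : ℕ → ℕ such that for every e : ℕ, if for all i the value φ_e(i) is defined and φ_e(i) ∈ I, then u₃(e) ∈ I and H_{u₃(e)} = ⋃_{i ∈ ℕ} H_{φ_e(i)}; that is, the coded family {H_a | a ∈ I} is uniformly closed under effective countable unions. -/
noncomputable section

/-- The coded family `{H_a | a ∈ I}` is uniformly closed under effective countable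
unions: there is a computable `u₃` such that whenever `φ_e` is total with values in `I`,
`u₃(e) ∈ I` and `H_{u₃(e)} = ⋃ᵢ H_{φ_e(i)}`. -/
theorem exists_u3 :
    ∃ u₃ : ℕ → ℕ, Computable u₃ ∧
      ∀ e : ℕ, (∀ i, ∃ v ∈ phi e i, v ∈ Iset) →
        u₃ e ∈ Iset ∧ Hset (u₃ e) = {x | ∃ i, ∃ v ∈ phi e i, x ∈ Hset v} := by
  obtain ⟨c, hc⟩ : ∃ c : Nat.Partrec.Code,
      c.eval = fun n : ℕ => phi n.unpair.1 n.unpair.2.unpair.1 := by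
    refine Nat.Partrec.Code.exists_code.1 ?_
    refine Partrec.nat_iff.1 ?_
    exact Nat.Partrec.Code.eval_part.comp
      ((Computable.ofNat _).comp (Computable.fst.comp Computable.unpair))
      (Computable.fst.comp (Computable.unpair.comp (Computable.snd.comp Computable.unpair)))
  set g : ℕ → ℕ := fun e => Nat.pair 1 (Encodable.encode (c.curry e)) with hg
  have hgc : Computable g := by
    have : Primrec g :=
      Primrec₂.natPair.comp (Primrec.const 1)
        (Primrec.encode.comp
          (Nat.Partrec.Code.primrec₂_curry.comp (Primrec.const c) Primrec.id))
    exact this.to_comp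
  have key : ∀ e k, phi (Encodable.encode (c.curry e)) k = phi e k.unpair.1 := by
    intro e k
    have : phi (Encodable.encode (c.curry e)) k = (c.curry e).eval k := by
      simp [phi]
    rw [this, Nat.Partrec.Code.eval_curry, hc]
    simp
  refine ⟨g, hgc, fun e he => ⟨?_, ?_⟩⟩
  · rw [Iset, ← OrderHom.map_lfp Psi0]
    refine Or.inr ⟨_, rfl, fun k => ?_⟩
    rw [key]
    exact he k.unpair.1
  · ext x
    constructor
    · intro hx
      have hx' : (g e, x) ∈ Psi1 (OrderHom.lfp Psi1) := by
        rw [OrderHom.map_lfp]; exact hx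
      rcases hx' with ⟨e', he', _⟩ | ⟨e', he', t, ht⟩
      · exact absurd (Nat.pair_eq_pair.1
          (show Nat.pair 1 (Encodable.encode (c.curry e)) = Nat.pair 0 e' from he')).1
          one_ne_zero
      · obtain ⟨-, he''⟩ := Nat.pair_eq_pair.1
          (show Nat.pair 1 (Encodable.encode (c.curry e)) = Nat.pair 1 e' from he')
        obtain ⟨v, hv, hvx⟩ := ht 0
        rw [← he'', key] at hv
        simp only [Nat.unpair_pair] at hv
        exact ⟨t, v, hv, hvx⟩
    · rintro ⟨i, v, hv, hx⟩
      show (g e, x) ∈ Hp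
      rw [Hp, ← OrderHom.map_lfp Psi1]
      refine Or.inr ⟨Encodable.encode (c.curry e),
        show g e = _ from rfl, i, fun s => ?_⟩
      rw [key]
      simp only [Nat.unpair_pair]
      exact ⟨v, hv, hx⟩
end
end

section
/- There exists a computable function u₂ : ℕ → ℕ such that for every a ∈ I: u₂(a) ∈ I and H_{u₂(a)} = ℕ \ H_a; that is, the coded family {H_a | a ∈ I} is uniformly closed under complementation. -/
noncomputable section

section U2Aux

open Nat.Partrec (Code)
open Nat.Partrec.Code

lemma phi_encode (c : Code) : phi (Encodable.encode c) = c.eval := by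
  simp [phi]

lemma Iset_fix : Psi0 Iset = Iset := OrderHom.map_lfp Psi0

lemma Hp_fix : Psi1 Hp = Hp := OrderHom.map_lfp Psi1

lemma mem_Iset_iff {a : ℕ} : a ∈ Iset ↔
    (∃ e, a = Nat.pair 0 e) ∨ ∃ e, a = Nat.pair 1 e ∧ ∀ k, ∃ v ∈ phi e k, v ∈ Iset := by
  conv_lhs => rw [← Iset_fix]
  exact Iff.rfl

lemma mem_Hp_iff {p : ℕ × ℕ} : p ∈ Hp ↔
    (∃ e, p.1 = Nat.pair 0 e ∧ p.2 = e) ∨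
    ∃ e, p.1 = Nat.pair 1 e ∧ ∃ t, ∀ s, ∃ v ∈ phi e (Nat.pair t s), (v, p.2) ∈ Hp := by
  conv_lhs => rw [← Hp_fix]
  exact Iff.rfl

lemma Hset0 {e x : ℕ} : x ∈ Hset (Nat.pair 0 e) ↔ x = e := by
  constructor
  · intro h
    rcases mem_Hp_iff.1 h with ⟨e', he', hx⟩ | ⟨e', he', _⟩
    · rcases Nat.pair_eq_pair.1 he' with ⟨_, rfl⟩; exact hx
    · exact absurd (Nat.pair_eq_pair.1 he').1 (by norm_num)
  · rintro rfl
    exact mem_Hp_iff.2 (Or.inl ⟨_, rfl, rfl⟩)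

lemma Hset1 {e x : ℕ} : x ∈ Hset (Nat.pair 1 e) ↔
    ∃ t, ∀ s, ∃ v ∈ phi e (Nat.pair t s), x ∈ Hset v := by
  constructor
  · intro h
    rcases mem_Hp_iff.1 h with ⟨e', he', _⟩ | ⟨e', he', ht⟩
    · exact absurd (Nat.pair_eq_pair.1 he').1 (by norm_num)
    · rcases Nat.pair_eq_pair.1 he' with ⟨_, rfl⟩; exact ht
  · intro h
    exact mem_Hp_iff.2 (Or.inr ⟨e, rfl, h⟩)

lemma ex_mem_iff {p : Part ℕ} {v₀ : ℕ} (h : v₀ ∈ p) {Q : ℕ → Prop} :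
    (∃ v ∈ p, Q v) ↔ Q v₀ := by
  constructor
  · rintro ⟨v, hv, hq⟩; rwa [Part.mem_unique hv h] at hq
  · intro hq; exact ⟨v₀, h, hq⟩

lemma exists_u2_codes : ∃ u₂ : ℕ → ℕ, Computable u₂ ∧
    (∀ e, ∃ c : Code, u₂ (Nat.pair 0 e) = Nat.pair 1 (Encodable.encode c) ∧
      ∀ k : ℕ, c.eval k = Part.some
        (if k.unpair.1 = e then Nat.pair 0 (k.unpair.2 % 2) else Nat.pair 0 k.unpair.1)) ∧
    (∀ e, ∃ c : Code, u₂ (Nat.pair 1 e) = Nat.pair 1 (Encodable.encode c) ∧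
      ∀ k : ℕ, ∃ d : Code, c.eval k = Part.some (Nat.pair 1 (Encodable.encode d)) ∧
        ∀ k' : ℕ, d.eval k' = (phi e (Nat.pair k.unpair.2 k'.unpair.1)).map u₂) := by
  have pu1 : Primrec fun x : ℕ => x.unpair.1 := Primrec.fst.comp Primrec.unpair
  have pu2 : Primrec fun x : ℕ => x.unpair.2 := Primrec.snd.comp Primrec.unpair
  -- the code c0
  have hC0f : Computable (fun x : ℕ =>
      if x.unpair.2.unpair.1 = x.unpair.1 then Nat.pair 0 (x.unpair.2.unpair.2 % 2)
      else Nat.pair 0 x.unpair.2.unpair.1) := by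
    apply Primrec.to_comp
    exact Primrec.ite (Primrec.eq.comp (pu1.comp pu2) pu1)
      (Primrec₂.natPair.comp (Primrec.const 0)
        (Primrec.nat_mod.comp (pu2.comp pu2) (Primrec.const 2)))
      (Primrec₂.natPair.comp (Primrec.const 0) (pu1.comp pu2))
  obtain ⟨c0, hc0⟩ := exists_code.1 (Partrec.nat_iff.1 hC0f)
  -- the code w
  have hW : Partrec (fun x : ℕ =>
      ((Denumerable.ofNat Code x.unpair.1.unpair.2.unpair.1).eval
          (Nat.pair x.unpair.1.unpair.2.unpair.2 x.unpair.2.unpair.1)).bind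
        fun r => (Denumerable.ofNat Code x.unpair.1.unpair.1).eval r) := by
    have h1 : Partrec (fun x : ℕ =>
        (Denumerable.ofNat Code x.unpair.1.unpair.2.unpair.1).eval
          (Nat.pair x.unpair.1.unpair.2.unpair.2 x.unpair.2.unpair.1)) :=
      eval_part.comp
        ((Computable.ofNat Code).comp ((pu1.comp (pu2.comp pu1)).to_comp))
        ((Primrec₂.natPair.comp (pu2.comp (pu2.comp pu1)) (pu1.comp pu2)).to_comp)
    exact h1.bind
      ((eval_part.comp
        ((Computable.ofNat Code).comp ((pu1.comp pu1).to_comp.comp Computable.fst))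
        Computable.snd).to₂)
  obtain ⟨w, hw⟩ := exists_code.1 (Partrec.nat_iff.1 hW)
  -- the code vv
  have hVf : Computable (fun x : ℕ => Nat.pair 1 (Encodable.encode
      (curry w (Nat.pair x.unpair.1.unpair.1
        (Nat.pair x.unpair.1.unpair.2 x.unpair.2.unpair.2))))) := by
    apply Primrec.to_comp
    exact Primrec₂.natPair.comp (Primrec.const 1)
      (Primrec.encode.comp (primrec₂_curry.comp (Primrec.const w)
        (Primrec₂.natPair.comp (pu1.comp pu1)
          (Primrec₂.natPair.comp (pu2.comp pu1) (pu2.comp pu2)))))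
  obtain ⟨vv, hvv⟩ := exists_code.1 (Partrec.nat_iff.1 hVf)
  -- the fixed point
  set G : ℕ → ℕ → ℕ := fun m a =>
    if a.unpair.1 = 0 then Nat.pair 1 (Encodable.encode (curry c0 a.unpair.2))
    else Nat.pair 1 (Encodable.encode (curry vv (Nat.pair m a.unpair.2))) with hGdef
  have hG : Primrec₂ G := by
    apply Primrec.ite (Primrec.eq.comp (pu1.comp Primrec.snd) (Primrec.const 0))
    · exact Primrec₂.natPair.comp (Primrec.const 1)
        (Primrec.encode.comp (primrec₂_curry.comp (Primrec.const c0) (pu2.comp Primrec.snd)))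
    · exact Primrec₂.natPair.comp (Primrec.const 1)
        (Primrec.encode.comp (primrec₂_curry.comp (Primrec.const vv)
          (Primrec₂.natPair.comp Primrec.fst (pu2.comp Primrec.snd))))
  have hf : Partrec₂ (fun (c : Code) (a : ℕ) => (Part.some (G (Encodable.encode c) a))) := by
    apply Computable₂.partrec₂
    exact hG.to_comp.comp (Computable.encode.comp Computable.fst) Computable.snd
  obtain ⟨U, hU⟩ := fixed_point₂ hf
  have hU' : ∀ a, U.eval a = Part.some (G (Encodable.encode U) a) := fun a => congrFun hU a
  refine ⟨G (Encodable.encode U), ?_, ?_, ?_⟩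
  · exact (hG.comp (Primrec.const (Encodable.encode U)) Primrec.id).to_comp
  · intro e
    refine ⟨curry c0 e, ?_, ?_⟩
    · simp [hGdef, Nat.unpair_pair]
    · intro k
      have : c0.eval (Nat.pair e k) = Part.some
          (if (Nat.pair e k).unpair.2.unpair.1 = (Nat.pair e k).unpair.1
            then Nat.pair 0 ((Nat.pair e k).unpair.2.unpair.2 % 2)
            else Nat.pair 0 (Nat.pair e k).unpair.2.unpair.1) := by
        rw [hc0]; rfl
      rw [eval_curry, this, Nat.unpair_pair]
  · intro e
    refine ⟨curry vv (Nat.pair (Encodable.encode U) e), ?_, ?_⟩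
    · simp [hGdef, Nat.unpair_pair]
    · intro k
      refine ⟨curry w (Nat.pair (Encodable.encode U) (Nat.pair e k.unpair.2)), ?_, ?_⟩
      · have : vv.eval (Nat.pair (Nat.pair (Encodable.encode U) e) k) = Part.some
            (Nat.pair 1 (Encodable.encode (curry w
              (Nat.pair (Encodable.encode U) (Nat.pair e k.unpair.2))))) := by
          rw [hvv]
          simp [Nat.unpair_pair]
        rw [eval_curry, this]
      · intro k'
        rw [eval_curry]
        have := congrFun hw (Nat.pair (Nat.pair (Encodable.encode U)
          (Nat.pair e k.unpair.2)) k')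
        rw [this]
        simp only [Nat.unpair_pair]
        have heq : ∀ r, (Denumerable.ofNat Code (Encodable.encode U)).eval r
            = Part.some (G (Encodable.encode U) r) := by
          intro r; rw [Denumerable.ofNat_encode]; exact hU' r
        show ((Denumerable.ofNat Code e).eval _).bind _ = _
        rw [show phi e (Nat.pair k.unpair.2 k'.unpair.1)
            = (Denumerable.ofNat Code e).eval (Nat.pair k.unpair.2 k'.unpair.1) from rfl]
        ext y
        simp [Part.mem_bind_iff, Part.mem_map_iff, heq, hU', eq_comm]

end U2Aux

/-- The coded family `{H_a | a ∈ I}` is uniformly closed under complementation: there is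
a computable `u₂` with `u₂(a) ∈ I` and `H_{u₂(a)} = ℕ \ H_a` for all `a ∈ I`. -/
theorem exists_u2 :
    ∃ u₂ : ℕ → ℕ, Computable u₂ ∧
      ∀ a ∈ Iset, u₂ a ∈ Iset ∧ Hset (u₂ a) = (Hset a)ᶜ := by
  obtain ⟨u₂, hcomp, spec0, spec1⟩ := exists_u2_codes
  refine ⟨u₂, hcomp, ?_⟩
  have main : Iset ≤ Iset ∩ {a | u₂ a ∈ Iset ∧ Hset (u₂ a) = (Hset a)ᶜ} := by
    apply OrderHom.lfp_le
    intro a ha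
    have haI : a ∈ Iset := by
      have := Psi0.monotone Set.inter_subset_left ha
      rwa [Iset_fix] at this
    refine ⟨haI, ?_⟩
    rcases ha with ⟨e, rfl⟩ | ⟨e, rfl, hk⟩
    · -- case a = pair 0 e
      obtain ⟨c, hu, hc⟩ := spec0 e
      have hphic : phi (Encodable.encode c) = c.eval := phi_encode c
      refine ⟨?_, ?_⟩
      · rw [hu]
        refine mem_Iset_iff.2 (Or.inr ⟨_, rfl, fun k => ?_⟩)
        rw [hphic, hc k]
        refine ⟨_, Part.mem_some _, ?_⟩
        split
        · exact mem_Iset_iff.2 (Or.inl ⟨_, rfl⟩)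
        · exact mem_Iset_iff.2 (Or.inl ⟨_, rfl⟩)
      · rw [hu]
        ext x
        rw [Set.mem_compl_iff, Hset1, Hset0]
        constructor
        · rintro ⟨t, hts⟩ he
          by_cases ht : t = e
          · have h0 := hts 0
            have h1 := hts 1
            rw [hphic, hc] at h0 h1
            simp [Nat.unpair_pair, ht, Part.mem_some_iff, Hset0] at h0 h1
            omega
          · have h0 := hts 0
            rw [hphic, hc] at h0
            simp [Nat.unpair_pair, ht, Part.mem_some_iff, Hset0] at h0
            omega
        · intro hx
          refine ⟨x, fun s => ?_⟩
          rw [hphic, hc]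
          simp [Nat.unpair_pair, hx, Part.mem_some_iff, Hset0]
    · -- case a = pair 1 e
      obtain ⟨c, hu, hc⟩ := spec1 e
      have hphic : phi (Encodable.encode c) = c.eval := phi_encode c
      choose v hv hvm using hk
      have hvP1 : ∀ k, u₂ (v k) ∈ Iset := fun k => (hvm k).2.1
      have hvP2 : ∀ k, Hset (u₂ (v k)) = (Hset (v k))ᶜ := fun k => (hvm k).2.2
      choose d hd hd' using hc
      refine ⟨?_, ?_⟩
      · rw [hu]
        refine mem_Iset_iff.2 (Or.inr ⟨_, rfl, fun k => ?_⟩)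
        rw [hphic, hd k]
        refine ⟨_, Part.mem_some _, ?_⟩
        refine mem_Iset_iff.2 (Or.inr ⟨_, rfl, fun k' => ?_⟩)
        rw [phi_encode (d k), hd' k k']
        exact ⟨u₂ (v (Nat.pair k.unpair.2 k'.unpair.1)), Part.mem_map _ (hv _), hvP1 _⟩
      · rw [hu]
        ext x
        rw [Set.mem_compl_iff, Hset1, Hset1]
        constructor
        · rintro ⟨t', hs'⟩ ⟨t, hts⟩
          have h1 := hs' t
          rw [hphic, hd, ex_mem_iff (Part.mem_some _)] at h1
          obtain ⟨t'', hss⟩ := Hset1.1 h1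
          have h2 := hss 0
          rw [phi_encode, hd'] at h2
          simp only [Nat.unpair_pair] at h2
          rw [ex_mem_iff (Part.mem_map u₂ (hv (Nat.pair t t'')))] at h2
          rw [hvP2] at h2
          have h3 := hts t''
          rw [ex_mem_iff (hv (Nat.pair t t''))] at h3
          exact h2 h3
        · intro hnx
          push_neg at hnx
          refine ⟨0, fun s' => ?_⟩
          rw [hphic, hd, ex_mem_iff (Part.mem_some _)]
          obtain ⟨s, hs⟩ := hnx s'
          refine Hset1.2 ⟨s, fun s'' => ?_⟩
          rw [phi_encode, hd']
          simp only [Nat.unpair_pair]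
          refine ⟨u₂ (v (Nat.pair s' s)), Part.mem_map _ (hv _), ?_⟩
          rw [hvP2]
          exact hs _ (hv _)
  intro a ha
  exact (main ha).2
end
end

section
/- If Q ⊆ ℕ is a fixed point of Φ_ψ (i.e. Φ_ψ(Q) = Q), then for every a ∈ I and every x : ℕ: x ∈ H_a if and only if ⟨a,x⟩ ∈ Q. -/
noncomputable section

/-- If `Q` is a fixed point of `Φ_ψ`, then for all `a ∈ I` and all `x`,
`x ∈ H_a ↔ ⟨a, x⟩ ∈ Q`. -/
theorem fixed_point_reduction (Q : Set ℕ) (hQ : PhiPsi Q = Q) :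
    ∀ a ∈ Iset, ∀ x : ℕ, x ∈ Hset a ↔ Nat.pair a x ∈ Q := by
  -- Forward direction: Hp ⊆ {p | pair p.1 p.2 ∈ Q}
  have fwd : Hp ⊆ {p : ℕ × ℕ | Nat.pair p.1 p.2 ∈ Q} := by
    refine OrderHom.lfp_le Psi1 ?_
    intro p hp
    rcases hp with ⟨e, he, hx⟩ | ⟨e, he, t, ht⟩
    · show Nat.pair p.1 p.2 ∈ Q
      rw [← hQ]
      exact ⟨p.1, p.2, e, rfl, Or.inl ⟨he, hx⟩⟩
    · show Nat.pair p.1 p.2 ∈ Q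
      rw [← hQ]
      refine ⟨p.1, p.2, e, rfl, Or.inr ⟨he, t, fun s => ?_⟩⟩
      obtain ⟨v, hv, hvA⟩ := ht s
      exact ⟨v, hv, hvA⟩
  -- Backward direction by induction on Iset
  have bwd : Iset ⊆ {a | ∀ x, Nat.pair a x ∈ Q → (a, x) ∈ Hp} := by
    refine OrderHom.lfp_le Psi0 ?_
    intro a ha x hx
    rw [← hQ] at hx
    obtain ⟨a', x', e', heq, hcase⟩ := hx
    obtain ⟨rfl, rfl⟩ := Nat.pair_eq_pair.mp heq
    rcases hcase with ⟨hae, hxe⟩ | ⟨hae, t, ht⟩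
    · rw [show Hp = Psi1 Hp from (OrderHom.map_lfp Psi1).symm]
      exact Or.inl ⟨e', hae, hxe⟩
    · rcases ha with ⟨e, hae0⟩ | ⟨e, hae1, hk⟩
      · rw [hae0] at hae
        exact absurd (Nat.pair_eq_pair.mp hae).1 (by norm_num)
      · have hee : e = e' := by
          rw [hae1] at hae
          exact (Nat.pair_eq_pair.mp hae).2
        subst hee
        rw [show Hp = Psi1 Hp from (OrderHom.map_lfp Psi1).symm]
        refine Or.inr ⟨e, hae, t, fun s => ?_⟩
        obtain ⟨v, hv, hvQ⟩ := ht s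
        obtain ⟨v', hv', hv'S⟩ := hk (Nat.pair t s)
        have : v' = v := Part.mem_unique hv' hv
        subst this
        exact ⟨v', hv', hv'S x hvQ⟩
  intro a ha x
  constructor
  · intro hx
    exact fwd hx
  · intro hx
    exact bwd ha x hx
end
end

section
/- If Q ⊆ ℕ is a fixed point of Φ_ψ (i.e. Φ_ψ(Q) = Q) and P = {x : ℕ | ∃ a k, x = ⟨a,k⟩ ∧ ⟨a,x⟩ ∉ Q}, then there is no a* ∈ I with P = H_{a*}; in particular no fixed point of Φ_ψ can belong to a family of subsets of ℕ that contains P whenever it contains Q together with its recursive sections, which is the diagonal argument showing ψ has no hyperarithmetical fixed point. -/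
noncomputable section

/-- Diagonal argument: if `Q` is a fixed point of `Φ_ψ` and
`P = {x | ∃ a k, x = ⟨a,k⟩ ∧ ⟨a,x⟩ ∉ Q}`, then `P ≠ H_{a*}` for every `a* ∈ I`. -/
theorem no_code_for_diagonal (Q : Set ℕ) (hQ : PhiPsi Q = Q) :
    ¬ ∃ a ∈ Iset,
      {x : ℕ | ∃ a' k, x = Nat.pair a' k ∧ Nat.pair a' x ∉ Q} = Hset a := by
  -- Lemma 1: Hp projects into Q.
  have lem1 : ∀ p ∈ Hp, Nat.pair p.1 p.2 ∈ Q := by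
    have h : Hp ≤ {p : ℕ × ℕ | Nat.pair p.1 p.2 ∈ Q} := by
      apply OrderHom.lfp_le
      intro p hp
      rcases hp with ⟨e, he, hx⟩ | ⟨e, he, t, ht⟩
      · show Nat.pair p.1 p.2 ∈ Q
        rw [← hQ]
        exact ⟨p.1, p.2, e, rfl, Or.inl ⟨he, hx⟩⟩
      · show Nat.pair p.1 p.2 ∈ Q
        rw [← hQ]
        refine ⟨p.1, p.2, e, rfl, Or.inr ⟨he, t, fun s => ?_⟩⟩
        obtain ⟨v, hv, hvA⟩ := ht s
        exact ⟨v, hv, hvA⟩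
    exact fun p hp => h hp
  -- Lemma 2: for a ∈ I, membership of ⟨a,x⟩ in Q implies (a,x) ∈ Hp.
  have lem2 : ∀ a ∈ Iset, ∀ x, Nat.pair a x ∈ Q → (a, x) ∈ Hp := by
    have h : Iset ≤ {a | ∀ x, Nat.pair a x ∈ Q → (a, x) ∈ Hp} := by
      apply OrderHom.lfp_le
      intro a ha x hx
      rw [← hQ] at hx
      obtain ⟨a', x', e', hpair, hcase⟩ := hx
      obtain ⟨ha', hx'⟩ := Nat.pair_eq_pair.mp hpair
      subst ha'; subst hx'
      have hHp : Psi1 Hp = Hp := OrderHom.map_lfp Psi1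
      rcases hcase with ⟨he', hxe⟩ | ⟨he', t, ht⟩
      · rw [← hHp]
        exact Or.inl ⟨e', he', hxe⟩
      · rcases ha with ⟨e, he⟩ | ⟨e, he, hk⟩
        · exfalso
          rw [he] at he'
          exact absurd (Nat.pair_eq_pair.mp he').1 (by norm_num)
        · have hee : e = e' := by
            rw [he] at he'
            exact (Nat.pair_eq_pair.mp he').2
          subst hee
          rw [← hHp]
          refine Or.inr ⟨e, he', t, fun s => ?_⟩
          obtain ⟨v, hv, hvQ⟩ := ht s
          obtain ⟨v', hv', hvS⟩ := hk (Nat.pair t s)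
          have hvv : v' = v := Part.mem_unique hv' hv
          subst hvv
          exact ⟨v', hv', hvS x hvQ⟩
    exact fun a ha => h ha
  -- Main diagonal argument.
  rintro ⟨a, ha, hP⟩
  set x := Nat.pair a 0 with hxdef
  by_cases h : (a, x) ∈ Hp
  · have hx : x ∈ Hset a := h
    rw [← hP] at hx
    obtain ⟨a', k, hxe, hnQ⟩ := hx
    have haa : a' = a := (Nat.pair_eq_pair.mp (hxdef.symm.trans hxe)).1.symm
    subst haa
    exact hnQ (lem1 (a', x) h)
  · have hx : x ∉ Hset a := h
    rw [← hP] at hx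
    have hQx : Nat.pair a x ∈ Q := by
      by_contra hn
      exact hx ⟨a, 0, rfl, hn⟩
    exact h (lem2 a ha x hQx)
end
end
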